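/- Let G = (V,E) be a finite simple graph with star number γ(G) = k, let v ∈ V, and let X be a nonempty finite set of new vertices disjoint from V. Let G' be the graph on V ∪ X whose edges are the edges of G together with all edges xu for x ∈ X and u ∈ N_G(v), where N_G(v) is the neighborhood of v in G (so that the vertices of {v} ∪ X are pairwise false twins in G'). Then γ(G') ≤ k + 1. -/

import Mathlib

open SimpleGraph

/-- A `k`-witness for a simple graph `G`: a positive weight function `w` on the vertices
together with `k` increasingly ordered intervals `[a i, b i]` of positive reals such that
two distinct vertices are adjacent iff the sum of their weights lies in ⋃ i, [a i, b i]. -/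
structure StarWitness {V : Type*} (G : SimpleGraph V) (k : ℕ) where
  w : V → ℝ
  a : Fin k → ℝ
  b : Fin k → ℝ
  w_pos : ∀ v, 0 < w v
  a_pos : ∀ i, 0 < a i
  a_le_b : ∀ i, a i ≤ b i
  ordered : ∀ i j : Fin k, i < j → b i < a j
  adj_iff : ∀ u v : V, u ≠ v →
    (G.Adj u v ↔ ∃ i : Fin k, a i ≤ w u + w v ∧ w u + w v ≤ b i)

/-- The star number `γ(G)` of a graph `G`: the smallest positive integer `k` such that
`G` admits a `k`-witness (i.e. `G` is a star-`k`-PCG). -/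
noncomputable def starNumber {V : Type*} (G : SimpleGraph V) : ℕ :=
  sInf {k | 0 < k ∧ Nonempty (StarWitness G k)}

/-- A witness is left-free if the weight of every non-edge exceeds `b 1` (the right endpoint
of the first interval). -/
def StarWitness.LeftFree {V : Type*} {G : SimpleGraph V} {k : ℕ}
    (W : StarWitness G k) : Prop :=
  ∀ u v : V, u ≠ v → ¬ G.Adj u v → ∀ i : Fin k, (i : ℕ) = 0 → W.b i < W.w u + W.w v

/-- A witness is right-free if the weight of every non-edge is below `a k` (the left endpoint
of the last interval). -/
def StarWitness.RightFree {V : Type*} {G : SimpleGraph V} {k : ℕ}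
    (W : StarWitness G k) : Prop :=
  ∀ u v : V, u ≠ v → ¬ G.Adj u v → ∀ i : Fin k, (i : ℕ) = k - 1 → W.w u + W.w v < W.a i

/-- A witness is in normal form if all weights are pairwise distinct and no doubled weight
equals the sum of the weights of two distinct vertices. -/
def StarWitness.NormalForm {V : Type*} {G : SimpleGraph V} {k : ℕ}
    (W : StarWitness G k) : Prop :=
  Function.Injective W.w ∧
    ∀ x u₁ u₂ : V, u₁ ≠ u₂ → 2 * W.w x ≠ W.w u₁ + W.w u₂

/-- The graph obtained from `G` by adding the vertices of `X` as false twins of `v`: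
each new vertex is adjacent exactly to the neighbors of `v` in `G`. -/
def addFalseTwins {V : Type*} (X : Type*) (G : SimpleGraph V) (v : V) :
    SimpleGraph (V ⊕ X) where
  Adj a b :=
    match a, b with
    | Sum.inl u₁, Sum.inl u₂ => G.Adj u₁ u₂
    | Sum.inl u, Sum.inr _ => G.Adj v u
    | Sum.inr _, Sum.inl u => G.Adj v u
    | Sum.inr _, Sum.inr _ => False
  symm := by
    constructor
    rintro (u | x) (u' | y) h
    · exact h.symm
    · exact h
    · exact h
    · exact h
  loopless := by
    constructor
    rintro (u | x) h
    · exact G.irrefl h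
    · exact h



lemma exists_pos_forall_lt (S : Finset ℝ) (h : ∀ s ∈ S, 0 < s) :
    ∃ ε : ℝ, 0 < ε ∧ ∀ s ∈ S, ε < s := by
  induction S using Finset.cons_induction with
  | empty => exact ⟨1, one_pos, by simp⟩
  | cons a s ha ih =>
    obtain ⟨ε, hε, hlt⟩ := ih (fun x hx => h x (Finset.mem_cons_of_mem hx))
    have ha0 : 0 < a := h a (Finset.mem_cons_self a s)
    refine ⟨min ε (a/2), by positivity, ?_⟩
    intro x hx
    rcases Finset.mem_cons.mp hx with rfl | hx
    · exact lt_of_le_of_lt (min_le_right _ _) (by linarith)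
    · exact lt_of_le_of_lt (min_le_left _ _) (hlt x hx)

lemma exists_forall_lt_of_finset (S : Finset ℝ) :
    ∃ U : ℝ, 0 < U ∧ ∀ s ∈ S, s < U := by
  induction S using Finset.cons_induction with
  | empty => exact ⟨1, one_pos, by simp⟩
  | cons a s ha ih =>
    obtain ⟨U, hU, hlt⟩ := ih
    refine ⟨max U (a+1), lt_of_lt_of_le hU (le_max_left _ _), ?_⟩
    intro x hx
    rcases Finset.mem_cons.mp hx with rfl | hx
    · exact lt_of_lt_of_le (by linarith) (le_max_right _ _)
    · exact lt_of_lt_of_le (hlt x hx) (le_max_left _ _)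

lemma exists_avoid (c : ℝ) (hc : 0 < c) (B : Finset ℝ) :
    ∃ δ : ℝ, 0 < δ ∧ δ < c ∧ δ ∉ B := by
  have hinf : (Set.Ioo (0:ℝ) c).Infinite := Set.Ioo_infinite hc
  obtain ⟨δ, hδ⟩ := (hinf.diff B.finite_toSet).nonempty
  exact ⟨δ, hδ.1.1, hδ.1.2, by simpa using hδ.2⟩

lemma keyLemma {Vt : Type*} [Fintype Vt] (G : SimpleGraph Vt) (w : Vt → ℝ)
    (hw : ∀ x, 0 < w x) (P : Finset (ℝ × ℝ))
    (hpos : ∀ p ∈ P, 0 < p.1) (hab : ∀ p ∈ P, p.1 ≤ p.2)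
    (hsep : ∀ p ∈ P, ∀ q ∈ P, p ≠ q → p.2 < q.1 ∨ q.2 < p.1)
    (hadj : ∀ u v : Vt, u ≠ v →
      (G.Adj u v ↔ ∃ p ∈ P, p.1 ≤ w u + w v ∧ w u + w v ≤ p.2))
    (K : ℕ) (hK : P.card ≤ K) : Nonempty (StarWitness G K) := by
  classical
  -- upper bound U
  obtain ⟨U, hU0, hUlt⟩ := exists_forall_lt_of_finset
    ((P.image Prod.snd) ∪ ((Finset.univ : Finset (Vt × Vt)).image fun q => w q.1 + w q.2))
  have hUP : ∀ p ∈ P, p.2 < U := fun p hp =>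
    hUlt _ (Finset.mem_union_left _ (Finset.mem_image_of_mem _ hp))
  have hUs : ∀ u v' : Vt, w u + w v' < U := fun u v' =>
    hUlt _ (Finset.mem_union_right _ (Finset.mem_image_of_mem _ (Finset.mem_univ (u, v'))))
  -- the fst's are distinct
  have hfst : ∀ p ∈ P, ∀ q ∈ P, p.1 = q.1 → p = q := by
    intro p hp q hq hpq
    by_contra hne
    rcases hsep p hp q hq hne with h | h
    · have := hab p hp; rw [hpq] at this; linarith
    · have := hab q hq; rw [← hpq] at this; linarith
  set L : Finset ℝ := P.image Prod.fst with hL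
  have hcard : L.card = P.card := by
    apply Finset.card_image_of_injOn
    intro p hp q hq h
    exact hfst p hp q hq h
  set e := L.orderIsoOfFin rfl with he
  have hsel : ∀ i : Fin L.card, ∃ p, p ∈ P ∧ p.1 = (e i : ℝ) := by
    intro i
    have hmem : (e i : ℝ) ∈ P.image Prod.fst := by rw [← hL]; exact (e i).2
    obtain ⟨p, hp, hpe⟩ := Finset.mem_image.mp hmem
    exact ⟨p, hp, hpe⟩
  choose f hfP hfeq using hsel
  have hmono : ∀ i j : Fin L.card, i < j → (f i).2 < (f j).1 := by
    intro i j hij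
    have hlt : (e i : ℝ) < (e j : ℝ) := by
      have := e.strictMono hij
      exact this
    have hne : f i ≠ f j := by
      intro h
      have hc : (f i).1 = (f j).1 := congrArg Prod.fst h
      rw [hfeq i, hfeq j] at hc
      linarith
    rcases hsep (f i) (hfP i) (f j) (hfP j) hne with h | h
    · exact h
    · exfalso
      have h1 := hab (f i) (hfP i)
      have h2 := hab (f j) (hfP j)
      have e1 := hfeq i
      have e2 := hfeq j
      linarith
  refine ⟨⟨w,
    fun j => if h : j.val < L.card then (f ⟨j.val, h⟩).1 else U + j.val,
    fun j => if h : j.val < L.card then (f ⟨j.val, h⟩).2 else U + j.val,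
    hw, ?_, ?_, ?_, ?_⟩⟩
  · intro j
    split_ifs with h
    · exact hpos _ (hfP _)
    · have : (0:ℝ) ≤ j.val := Nat.cast_nonneg _
      linarith
  · intro j
    split_ifs with h
    · exact hab _ (hfP _)
    · exact le_refl _
  · intro i j hij
    split_ifs with h1 h2 h2
    · exact hmono _ _ (by exact hij)
    · have : (f ⟨i.val, h1⟩).2 < U := hUP _ (hfP _)
      have : (0:ℝ) ≤ j.val := Nat.cast_nonneg _
      linarith [hUP (f ⟨i.val, h1⟩) (hfP _)]
    · omega
    · have : (i.val : ℝ) < j.val := by exact_mod_cast hij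
      linarith
  · intro u v' huv
    rw [hadj u v' huv]
    constructor
    · rintro ⟨p, hp, h1, h2⟩
      have hmem : p.1 ∈ L := by
        rw [hL]; exact Finset.mem_image_of_mem _ hp
      set i := e.symm ⟨p.1, hmem⟩ with hi
      have hei : (e i : ℝ) = p.1 := by
        rw [hi, OrderIso.apply_symm_apply]
      have hfi : f i = p := by
        apply hfst _ (hfP i) _ hp
        rw [hfeq i, hei]
      refine ⟨⟨i.val, lt_of_lt_of_le i.2 (hcard ▸ hK)⟩, ?_, ?_⟩
      · dsimp only
        rw [dif_pos i.2]
        simp only [Fin.eta]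
        rw [hfi]; exact h1
      · dsimp only
        rw [dif_pos i.2]
        simp only [Fin.eta]
        rw [hfi]; exact h2
    · rintro ⟨j, h1, h2⟩
      by_cases h : j.val < L.card
      · rw [dif_pos h] at h1 h2
        exact ⟨f ⟨j.val, h⟩, hfP _, h1, h2⟩
      · rw [dif_neg h] at h1
        have hs := hUs u v'
        have : (0:ℝ) ≤ j.val := Nat.cast_nonneg _
        linarith

lemma four_pow_ne {a b c d : ℕ} (hab : a ≤ b) (hcd : c ≤ d) (hbd : b < d) :
    (4:ℝ)^a + 4^b ≠ 4^c + 4^d := by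
  have hmono : StrictMono (fun n : ℕ => (4:ℝ)^n) :=
    fun m n h => pow_lt_pow_right₀ (by norm_num) h
  have h1 : (4:ℝ)^a ≤ 4^b := hmono.monotone hab
  have h2 : (4:ℝ)^(b+1) ≤ 4^d := hmono.monotone hbd
  have h3 : (4:ℝ)^(b+1) = 4^b * 4 := pow_succ 4 b
  have h4 : (0:ℝ) < 4^c := by positivity
  have h5 : (0:ℝ) < 4^b := by positivity
  intro h
  linarith

lemma four_pow_sum_eq_aux {a b c d : ℕ} (hab : a ≤ b) (hcd : c ≤ d)
    (h : (4:ℝ)^a + 4^b = 4^c + 4^d) : a = c ∧ b = d := by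
  have hmono : StrictMono (fun n : ℕ => (4:ℝ)^n) :=
    fun m n hx => pow_lt_pow_right₀ (by norm_num) hx
  have hbd : b = d := by
    rcases lt_trichotomy b d with hlt | heq | hgt
    · exact absurd h (four_pow_ne hab hcd hlt)
    · exact heq
    · exact absurd h.symm (four_pow_ne hcd hab hgt)
  subst hbd
  refine ⟨?_, rfl⟩
  have : (4:ℝ)^a = 4^c := by linarith
  exact hmono.injective this

lemma four_pow_sum_eq {a b c d : ℕ} (h : (4:ℝ)^a + 4^b = 4^c + 4^d) :
    (a = c ∧ b = d) ∨ (a = d ∧ b = c) := by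
  rcases le_total a b with hab | hba <;> rcases le_total c d with hcd | hdc
  · exact Or.inl (four_pow_sum_eq_aux hab hcd h)
  · obtain ⟨h1, h2⟩ := four_pow_sum_eq_aux hab hdc (by linarith)
    exact Or.inr ⟨h1, h2⟩
  · obtain ⟨h1, h2⟩ := four_pow_sum_eq_aux hba hcd (by linarith)
    exact Or.inr ⟨h2, h1⟩
  · obtain ⟨h1, h2⟩ := four_pow_sum_eq_aux hba hdc (by linarith)
    exact Or.inl ⟨h2, h1⟩

lemma exists_witness {V : Type*} [Fintype V] (G : SimpleGraph V) :
    ∃ k, 0 < k ∧ Nonempty (StarWitness G k) := by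
  classical
  set emb := Fintype.equivFin V with hemb
  set w : V → ℝ := fun u => (4:ℝ) ^ ((emb u : ℕ)) with hwdef
  have hw : ∀ u, 0 < w u := fun u => by positivity
  have hsum : ∀ u1 u2 u3 u4 : V, w u1 + w u2 = w u3 + w u4 →
      (u1 = u3 ∧ u2 = u4) ∨ (u1 = u4 ∧ u2 = u3) := by
    intro u1 u2 u3 u4 h
    have hinj : ∀ x y : V, (emb x : ℕ) = (emb y : ℕ) → x = y := by
      intro x y hxy
      exact emb.injective (Fin.val_injective hxy)
    rcases four_pow_sum_eq h with ⟨h1, h2⟩ | ⟨h1, h2⟩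
    · exact Or.inl ⟨hinj _ _ h1, hinj _ _ h2⟩
    · exact Or.inr ⟨hinj _ _ h1, hinj _ _ h2⟩
  set ES : Finset ℝ :=
    (Finset.univ.filter fun p : V × V => G.Adj p.1 p.2).image
      (fun p => w p.1 + w p.2) with hES
  refine ⟨(ES.image fun s => (s, s)).card + 1, Nat.succ_pos _, ?_⟩
  apply keyLemma G w hw (ES.image fun s => (s, s))
  · rintro p hp
    obtain ⟨s, hs, rfl⟩ := Finset.mem_image.mp hp
    obtain ⟨q, hq, rfl⟩ := Finset.mem_image.mp hs
    have := hw q.1; have := hw q.2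
    dsimp only; linarith
  · rintro p hp
    obtain ⟨s, _, rfl⟩ := Finset.mem_image.mp hp
    exact le_refl _
  · rintro p hp q hq hne
    obtain ⟨s, _, rfl⟩ := Finset.mem_image.mp hp
    obtain ⟨t, _, rfl⟩ := Finset.mem_image.mp hq
    have hst : s ≠ t := fun h => hne (by rw [h])
    rcases lt_or_gt_of_ne hst with h | h
    · exact Or.inl h
    · exact Or.inr h
  · intro u u' huv
    constructor
    · intro hA
      have hmemES : w u + w u' ∈ ES :=
        Finset.mem_image_of_mem _ (Finset.mem_filter.mpr ⟨Finset.mem_univ (u, u'), hA⟩)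
      exact ⟨(w u + w u', w u + w u'), Finset.mem_image_of_mem _ hmemES,
        le_refl _, le_refl _⟩
    · rintro ⟨p, hp, h1, h2⟩
      obtain ⟨s, hs, rfl⟩ := Finset.mem_image.mp hp
      obtain ⟨q, hq, rfl⟩ := Finset.mem_image.mp hs
      have hAq : G.Adj q.1 q.2 := (Finset.mem_filter.mp hq).2
      dsimp only at h1 h2
      have heq : w u + w u' = w q.1 + w q.2 := le_antisymm h2 h1
      rcases hsum _ _ _ _ heq with ⟨rfl, rfl⟩ | ⟨rfl, rfl⟩
      · exact hAq
      · exact hAq.symm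
  · exact Nat.le_succ _

/-- Theorem 11 (false twins): adding to `G` a set `X` of new vertices so that `{v} ∪ X`
is a set of pairwise false twins increases the star number by at most one. -/
theorem stmt_11 {V X : Type*} [Fintype V] [Fintype X] [Nonempty X]
    (G : SimpleGraph V) (v : V) (k : ℕ)
    (hg : starNumber G = k) :
    starNumber (addFalseTwins X G v) ≤ k + 1 := by
  classical
  -- extract a k-witness for G
  have hSne : {k' | 0 < k' ∧ Nonempty (StarWitness G k')}.Nonempty := exists_witness G
  have hkmem : 0 < k ∧ Nonempty (StarWitness G k) := by
    rw [starNumber] at hg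
    have h := Nat.sInf_mem hSne
    rw [hg] at h
    exact h
  obtain ⟨hk0, ⟨W⟩⟩ := hkmem
  -- choose the margin m
  obtain ⟨m, hm0, hm⟩ := exists_pos_forall_lt
    ((((Finset.univ : Finset (Fin k × Fin k)).filter fun p => p.1 < p.2).image
        (fun p => W.a p.2 - W.b p.1)) ∪
     (((((Finset.univ : Finset (V × V)).filter
          fun p => p.1 ≠ p.2 ∧ ¬ G.Adj p.1 p.2) ×ˢ (Finset.univ : Finset (Fin k))).image
        fun q => max (W.a q.2 - (W.w q.1.1 + W.w q.1.2))
          ((W.w q.1.1 + W.w q.1.2) - W.b q.2))))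
    (by
      intro s hs
      rcases Finset.mem_union.mp hs with h | h
      · obtain ⟨p, hp, rfl⟩ := Finset.mem_image.mp h
        have := W.ordered p.1 p.2 (Finset.mem_filter.mp hp).2
        linarith
      · obtain ⟨q, hq, rfl⟩ := Finset.mem_image.mp h
        obtain ⟨hq1, _⟩ := Finset.mem_product.mp hq
        obtain ⟨-, hne, hnA⟩ := Finset.mem_filter.mp hq1
        have hnotin : ¬ (W.a q.2 ≤ W.w q.1.1 + W.w q.1.2 ∧
            W.w q.1.1 + W.w q.1.2 ≤ W.b q.2) := by
          intro hin
          exact hnA ((W.adj_iff q.1.1 q.1.2 hne).mpr ⟨q.2, hin⟩)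
        rw [lt_max_iff]
        rcases le_or_gt (W.a q.2) (W.w q.1.1 + W.w q.1.2) with h1 | h1
        · rcases le_or_gt (W.w q.1.1 + W.w q.1.2) (W.b q.2) with h2 | h2
          · exact absurd ⟨h1, h2⟩ hnotin
          · right; linarith
        · left; linarith)
  have hmgap : ∀ i j : Fin k, i < j → m < W.a j - W.b i := by
    intro i j hij
    exact hm _ (Finset.mem_union_left _ (Finset.mem_image_of_mem _
      (Finset.mem_filter.mpr ⟨Finset.mem_univ (i, j), hij⟩)))
  have hmmar : ∀ u1 u2 : V, u1 ≠ u2 → ¬ G.Adj u1 u2 → ∀ i : Fin k,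
      m < max (W.a i - (W.w u1 + W.w u2)) ((W.w u1 + W.w u2) - W.b i) := by
    intro u1 u2 hne hnA i
    have hq1 : (u1, u2) ∈ (Finset.univ : Finset (V × V)).filter
        (fun p => p.1 ≠ p.2 ∧ ¬ G.Adj p.1 p.2) :=
      Finset.mem_filter.mpr ⟨Finset.mem_univ _, hne, hnA⟩
    have hq2 : (((u1, u2), i) : (V × V) × Fin k) ∈
        ((Finset.univ : Finset (V × V)).filter
          (fun p => p.1 ≠ p.2 ∧ ¬ G.Adj p.1 p.2)) ×ˢ (Finset.univ : Finset (Fin k)) :=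
      Finset.mem_product.mpr ⟨hq1, Finset.mem_univ i⟩
    exact hm _ (Finset.mem_union_right _ (Finset.mem_image_of_mem _ hq2))
  -- choose δ
  obtain ⟨δ, hδ0, hδm, hδB⟩ := exists_avoid (m/4) (by linarith)
    ((Finset.univ.image fun u : V => W.w u - W.w v) ∪
     (Finset.univ.image fun p : V × V => (W.w p.1 + W.w p.2)/2 - W.w v))
  set w₁ : V → ℝ := Function.update W.w v (W.w v + δ) with hw₁def
  have hw₁v : w₁ v = W.w v + δ := Function.update_self v _ _
  have hw₁u : ∀ u : V, u ≠ v → w₁ u = W.w u := fun u hu => Function.update_of_ne hu _ _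
  have hw₁ge : ∀ u : V, W.w u ≤ w₁ u ∧ w₁ u ≤ W.w u + δ := by
    intro u
    by_cases hu : u = v
    · subst hu; rw [hw₁v]; constructor <;> linarith
    · rw [hw₁u u hu]; constructor <;> linarith
  have hw₁pos : ∀ u : V, 0 < w₁ u := fun u => lt_of_lt_of_le (W.w_pos u) (hw₁ge u).1
  set P₁ : ℝ := 2 * w₁ v with hP₁def
  have hP₁pos : 0 < P₁ := by have := hw₁pos v; rw [hP₁def]; linarith
  have h2v : ∀ u1 u2 : V, u1 ≠ u2 → w₁ u1 + w₁ u2 ≠ P₁ := by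
    intro u1 u2 hne heq
    rw [hP₁def, hw₁v] at heq
    by_cases h1 : u1 = v
    · have hu2 : u2 ≠ v := fun h => hne (h1.trans h.symm)
      rw [h1, hw₁v, hw₁u u2 hu2] at heq
      apply hδB
      apply Finset.mem_union_left
      apply Finset.mem_image.mpr
      exact ⟨u2, Finset.mem_univ _, by linarith⟩
    · by_cases h2 : u2 = v
      · rw [h2, hw₁v, hw₁u u1 h1] at heq
        apply hδB
        apply Finset.mem_union_left
        apply Finset.mem_image.mpr
        exact ⟨u1, Finset.mem_univ _, by linarith⟩
      · rw [hw₁u u1 h1, hw₁u u2 h2] at heq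
        apply hδB
        apply Finset.mem_union_right
        apply Finset.mem_image.mpr
        exact ⟨(u1, u2), Finset.mem_univ _, by dsimp only; linarith⟩
  -- choose ρ
  obtain ⟨ρ, hρ0, hρ'⟩ := exists_pos_forall_lt
    ((((Finset.univ : Finset (V × V)).filter fun p => p.1 ≠ p.2)).image
      fun p => |w₁ p.1 + w₁ p.2 - P₁|)
    (by
      intro s hs
      obtain ⟨p, hp, rfl⟩ := Finset.mem_image.mp hs
      have hne := (Finset.mem_filter.mp hp).2
      exact abs_pos.mpr (sub_ne_zero.mpr (h2v p.1 p.2 hne)))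
  have hρ : ∀ u1 u2 : V, u1 ≠ u2 → ρ < |w₁ u1 + w₁ u2 - P₁| := by
    intro u1 u2 hne
    exact hρ' _ (Finset.mem_image_of_mem _
      (Finset.mem_filter.mpr ⟨Finset.mem_univ (u1, u2), hne⟩))
  have habs : ∀ u1 u2 : V, u1 ≠ u2 →
      (w₁ u1 + w₁ u2 ≤ P₁ - ρ ∨ P₁ + ρ ≤ w₁ u1 + w₁ u2) := by
    intro u1 u2 hne
    have h := hρ u1 u2 hne
    rcases le_or_gt (w₁ u1 + w₁ u2) P₁ with h1 | h1
    · left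
      rw [abs_of_nonpos (by linarith)] at h
      linarith
    · right
      rw [abs_of_pos (by linarith)] at h
      linarith
  -- choose ε
  obtain ⟨ε, hε0, hεlt, hεB⟩ := exists_avoid (min (m/8) (ρ/8))
    (lt_min (by linarith) (by linarith))
    ((Finset.univ.image fun i : Fin k => W.a i - P₁) ∪
     (Finset.univ.image fun i : Fin k => (W.a i - P₁)/2))
  have hεm : ε < m/8 := lt_of_lt_of_le hεlt (min_le_left _ _)
  have hερ : ε < ρ/8 := lt_of_lt_of_le hεlt (min_le_right _ _)
  have hεa : ∀ i : Fin k, P₁ + ε ≠ W.a i ∧ P₁ + 2*ε ≠ W.a i := by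
    intro i
    constructor
    · intro h
      exact hεB (Finset.mem_union_left _ (Finset.mem_image.mpr
        ⟨i, Finset.mem_univ _, by linarith⟩))
    · intro h
      exact hεB (Finset.mem_union_right _ (Finset.mem_image.mpr
        ⟨i, Finset.mem_univ _, by linarith⟩))
  have hgap' : ∀ i j : Fin k, i < j → W.b i + m/2 < W.a j := by
    intro i j hij; have := hmgap i j hij; linarith
  -- the pieces
  obtain ⟨PS, hpos', hab', hsep', hsub, hcard, hcov, hN3, hN4⟩ :
      ∃ PS : Finset (ℝ × ℝ),
        (∀ p ∈ PS, 0 < p.1) ∧ (∀ p ∈ PS, p.1 ≤ p.2) ∧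
        (∀ p ∈ PS, ∀ q ∈ PS, p ≠ q → p.2 < q.1 ∨ q.2 < p.1) ∧
        (∀ p ∈ PS, ∃ i : Fin k, W.a i ≤ p.1 ∧ p.2 ≤ W.b i + m/2) ∧
        PS.card ≤ k + 1 ∧
        (∀ s : ℝ, ∀ i : Fin k, W.a i ≤ s → s ≤ W.b i + m/2 →
          (s ≤ P₁ - ρ/2 ∨ P₁ + ρ/2 ≤ s) → ∃ p ∈ PS, p.1 ≤ s ∧ s ≤ p.2) ∧
        (∀ p ∈ PS, ¬(p.1 ≤ P₁ + ε ∧ P₁ + ε ≤ p.2)) ∧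
        (∀ p ∈ PS, ¬(p.1 ≤ P₁ + 2*ε ∧ P₁ + 2*ε ≤ p.2)) := by
    by_cases hC : ∃ i₀ : Fin k, W.a i₀ ≤ P₁ - ρ/2 ∧ P₁ + ρ/2 ≤ W.b i₀ + m/2
    · -- Case 1 : split the interval containing P₁
      obtain ⟨i₀, hLi, hRi⟩ := hC
      have hLb : P₁ - ρ/2 ≤ W.b i₀ + m/2 := by linarith
      have hRa : W.a i₀ ≤ P₁ + ρ/2 := by linarith
      set PSS : Finset (ℝ × ℝ) :=
        ((Finset.univ.erase i₀).image fun i => (W.a i, W.b i + m/2)) ∪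
          {(W.a i₀, P₁ - ρ/2), (P₁ + ρ/2, W.b i₀ + m/2)} with hPSS
      have hmem : ∀ p : ℝ × ℝ, p ∈ PSS →
          (∃ i : Fin k, i ≠ i₀ ∧ p = (W.a i, W.b i + m/2)) ∨
            p = (W.a i₀, P₁ - ρ/2) ∨ p = (P₁ + ρ/2, W.b i₀ + m/2) := by
        intro p hp
        rcases Finset.mem_union.mp hp with h | h
        · obtain ⟨i, hi, hip⟩ := Finset.mem_image.mp h
          exact Or.inl ⟨i, (Finset.mem_erase.mp hi).1, hip.symm⟩
        · rcases Finset.mem_insert.mp h with h | h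
          · exact Or.inr (Or.inl h)
          · exact Or.inr (Or.inr (Finset.mem_singleton.mp h))
      have hmem1 : ∀ i : Fin k, i ≠ i₀ → (W.a i, W.b i + m/2) ∈ PSS := fun i hi =>
        Finset.mem_union_left _ (Finset.mem_image_of_mem _
          (Finset.mem_erase.mpr ⟨hi, Finset.mem_univ i⟩))
      have hmemL : (W.a i₀, P₁ - ρ/2) ∈ PSS :=
        Finset.mem_union_right _ (Finset.mem_insert_self _ _)
      have hmemR : (P₁ + ρ/2, W.b i₀ + m/2) ∈ PSS :=
        Finset.mem_union_right _ (Finset.mem_insert_of_mem (Finset.mem_singleton_self _))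
      refine ⟨PSS, ?_, ?_, ?_, ?_, ?_, ?_, ?_, ?_⟩
      · intro p hp
        rcases hmem p hp with ⟨i, hi, rfl⟩ | rfl | rfl
        · exact W.a_pos i
        · exact W.a_pos i₀
        · show 0 < P₁ + ρ/2; linarith
      · intro p hp
        rcases hmem p hp with ⟨i, hi, rfl⟩ | rfl | rfl
        · show W.a i ≤ W.b i + m/2
          have := W.a_le_b i; linarith
        · exact hLi
        · exact hRi
      · intro p hp q hq hne
        rcases hmem p hp with ⟨i, hi, rfl⟩ | rfl | rfl <;>
          rcases hmem q hq with ⟨j, hj, rfl⟩ | rfl | rfl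
        · have hij : i ≠ j := fun h => hne (by rw [h])
          rcases hij.lt_or_gt with h | h
          · exact Or.inl (hgap' i j h)
          · exact Or.inr (hgap' j i h)
        · rcases hi.lt_or_gt with h | h
          · exact Or.inl (hgap' i i₀ h)
          · refine Or.inr ?_
            show P₁ - ρ/2 < W.a i
            have := hgap' i₀ i h; linarith
        · rcases hi.lt_or_gt with h | h
          · refine Or.inl ?_
            show W.b i + m/2 < P₁ + ρ/2
            have := hgap' i i₀ h; linarith
          · exact Or.inr (hgap' i₀ i h)
        · rcases hj.lt_or_gt with h | h
          · exact Or.inr (hgap' j i₀ h)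
          · refine Or.inl ?_
            show P₁ - ρ/2 < W.a j
            have := hgap' i₀ j h; linarith
        · exact absurd rfl hne
        · refine Or.inl ?_
          show P₁ - ρ/2 < P₁ + ρ/2
          linarith
        · rcases hj.lt_or_gt with h | h
          · refine Or.inr ?_
            show W.b j + m/2 < P₁ + ρ/2
            have := hgap' j i₀ h; linarith
          · exact Or.inl (hgap' i₀ j h)
        · refine Or.inr ?_
          show P₁ - ρ/2 < P₁ + ρ/2
          linarith
        · exact absurd rfl hne
      · intro p hp
        rcases hmem p hp with ⟨i, hi, rfl⟩ | rfl | rfl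
        · exact ⟨i, le_refl _, le_refl _⟩
        · exact ⟨i₀, le_refl _, hLb⟩
        · exact ⟨i₀, hRa, le_refl _⟩
      · have h1 : ((Finset.univ.erase i₀).image
            fun i => (W.a i, W.b i + m/2)).card ≤ k - 1 := by
          refine le_trans Finset.card_image_le ?_
          rw [Finset.card_erase_of_mem (Finset.mem_univ _)]
          simp
        have h2 : ({(W.a i₀, P₁ - ρ/2), (P₁ + ρ/2, W.b i₀ + m/2)} :
            Finset (ℝ × ℝ)).card ≤ 2 :=
          le_trans (Finset.card_insert_le _ _) (by simp)
        calc PSS.card ≤ _ + _ := Finset.card_union_le _ _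
          _ ≤ (k - 1) + 2 := add_le_add h1 h2
          _ ≤ k + 1 := by omega
      · intro s i h1s h2s hside
        by_cases hii : i = i₀
        · subst hii
          rcases hside with h | h
          · exact ⟨_, hmemL, h1s, h⟩
          · exact ⟨_, hmemR, h, h2s⟩
        · exact ⟨_, hmem1 i hii, h1s, h2s⟩
      · intro p hp
        rcases hmem p hp with ⟨i, hi, rfl⟩ | rfl | rfl
        · rintro ⟨ha, hb⟩
          simp only at ha hb
          rcases hi.lt_or_gt with h | h
          · have := hgap' i i₀ h; linarith
          · have := hgap' i₀ i h; linarith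
        · rintro ⟨ha, hb⟩
          simp only at ha hb
          linarith
        · rintro ⟨ha, hb⟩
          simp only at ha hb
          linarith
      · intro p hp
        rcases hmem p hp with ⟨i, hi, rfl⟩ | rfl | rfl
        · rintro ⟨ha, hb⟩
          simp only at ha hb
          rcases hi.lt_or_gt with h | h
          · have := hgap' i i₀ h; linarith
          · have := hgap' i₀ i h; linarith
        · rintro ⟨ha, hb⟩
          simp only at ha hb
          linarith
        · rintro ⟨ha, hb⟩
          simp only at ha hb
          linarith
    · -- Case 2 : trim each interval away from the gap around P₁
      set C : Fin k → ℝ × ℝ := fun i =>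
        if W.a i ≤ P₁ - ρ/2 then (W.a i, min (W.b i + m/2) (P₁ - ρ/2))
        else if P₁ + ρ/2 ≤ W.b i + m/2 then (max (W.a i) (P₁ + ρ/2), W.b i + m/2)
        else (W.a i, W.a i) with hCdef
      have hCfacts : ∀ i : Fin k,
          W.a i ≤ (C i).1 ∧ (C i).2 ≤ W.b i + m/2 ∧ (C i).1 ≤ (C i).2 ∧ 0 < (C i).1 ∧
          ¬((C i).1 ≤ P₁ + ε ∧ P₁ + ε ≤ (C i).2) ∧
          ¬((C i).1 ≤ P₁ + 2*ε ∧ P₁ + 2*ε ≤ (C i).2) := by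
        intro i
        have hai := W.a_pos i
        have habi := W.a_le_b i
        by_cases h1 : W.a i ≤ P₁ - ρ/2
        · have hC1 : C i = (W.a i, min (W.b i + m/2) (P₁ - ρ/2)) := by
            simp only [hCdef]; rw [if_pos h1]
          rw [hC1]
          have hmin : min (W.b i + m/2) (P₁ - ρ/2) ≤ P₁ - ρ/2 := min_le_right _ _
          refine ⟨le_refl _, min_le_left _ _, le_min (by linarith) h1, hai, ?_, ?_⟩
          · rintro ⟨-, hb⟩
            simp only at hb
            linarith
          · rintro ⟨-, hb⟩
            simp only at hb
            linarith
        · by_cases h2 : P₁ + ρ/2 ≤ W.b i + m/2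
          · have hC2 : C i = (max (W.a i) (P₁ + ρ/2), W.b i + m/2) := by
              simp only [hCdef]; rw [if_neg h1, if_pos h2]
            rw [hC2]
            have hmax : P₁ + ρ/2 ≤ max (W.a i) (P₁ + ρ/2) := le_max_right _ _
            refine ⟨le_max_left _ _, le_refl _, max_le (by linarith) h2,
              lt_of_lt_of_le hai (le_max_left _ _), ?_, ?_⟩
            · rintro ⟨ha, -⟩
              simp only at ha
              linarith
            · rintro ⟨ha, -⟩
              simp only at ha
              linarith
          · have hC3 : C i = (W.a i, W.a i) := by
              simp only [hCdef]; rw [if_neg h1, if_neg h2]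
            rw [hC3]
            refine ⟨le_refl _, by linarith, le_refl _, hai, ?_, ?_⟩
            · rintro ⟨ha, hb⟩
              simp only at ha hb
              exact (hεa i).1 (le_antisymm hb ha)
            · rintro ⟨ha, hb⟩
              simp only at ha hb
              exact (hεa i).2 (le_antisymm hb ha)
      refine ⟨Finset.univ.image C, ?_, ?_, ?_, ?_, ?_, ?_, ?_, ?_⟩
      · intro p hp
        obtain ⟨i, -, rfl⟩ := Finset.mem_image.mp hp
        exact (hCfacts i).2.2.2.1
      · intro p hp
        obtain ⟨i, -, rfl⟩ := Finset.mem_image.mp hp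
        exact (hCfacts i).2.2.1
      · intro p hp q hq hne
        obtain ⟨i, -, rfl⟩ := Finset.mem_image.mp hp
        obtain ⟨j, -, rfl⟩ := Finset.mem_image.mp hq
        have hij : i ≠ j := fun h => hne (by rw [h])
        rcases hij.lt_or_gt with h | h
        · exact Or.inl (lt_of_le_of_lt (hCfacts i).2.1
            (lt_of_lt_of_le (hgap' i j h) (hCfacts j).1))
        · exact Or.inr (lt_of_le_of_lt (hCfacts j).2.1
            (lt_of_lt_of_le (hgap' j i h) (hCfacts i).1))
      · intro p hp
        obtain ⟨i, -, rfl⟩ := Finset.mem_image.mp hp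
        exact ⟨i, (hCfacts i).1, (hCfacts i).2.1⟩
      · calc (Finset.univ.image C).card ≤ (Finset.univ : Finset (Fin k)).card :=
            Finset.card_image_le
          _ = k := by simp
          _ ≤ k + 1 := Nat.le_succ k
      · intro s i h1s h2s hside
        refine ⟨C i, Finset.mem_image_of_mem _ (Finset.mem_univ i), ?_⟩
        by_cases h1 : W.a i ≤ P₁ - ρ/2
        · have hC1 : C i = (W.a i, min (W.b i + m/2) (P₁ - ρ/2)) := by
            simp only [hCdef]; rw [if_pos h1]
          rw [hC1]
          have hs' : s ≤ P₁ - ρ/2 := by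
            rcases hside with h | h
            · exact h
            · exact absurd ⟨i, h1, by linarith⟩ hC
          exact ⟨h1s, le_min h2s hs'⟩
        · by_cases h2 : P₁ + ρ/2 ≤ W.b i + m/2
          · have hC2 : C i = (max (W.a i) (P₁ + ρ/2), W.b i + m/2) := by
              simp only [hCdef]; rw [if_neg h1, if_pos h2]
            rw [hC2]
            have hs' : P₁ + ρ/2 ≤ s := by
              rcases hside with h | h
              · exfalso
                push_neg at h1
                linarith
              · exact h
            exact ⟨max_le h1s hs', h2s⟩
          · exfalso
            push_neg at h1 h2
            rcases hside with h | h <;> linarith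
      · intro p hp
        obtain ⟨i, -, rfl⟩ := Finset.mem_image.mp hp
        exact (hCfacts i).2.2.2.2.1
      · intro p hp
        obtain ⟨i, -, rfl⟩ := Finset.mem_image.mp hp
        exact (hCfacts i).2.2.2.2.2
  -- new weights
  set w' : V ⊕ X → ℝ := Sum.elim w₁ (fun _ => w₁ v + ε) with hw'def
  have hw'pos : ∀ p : V ⊕ X, 0 < w' p := by
    rintro (u | x)
    · exact hw₁pos u
    · have := hw₁pos v; show 0 < w₁ v + ε; linarith
  -- coverage of edges inside V
  have hedge : ∀ u1 u2 : V, u1 ≠ u2 → G.Adj u1 u2 →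
      ∃ pc ∈ PS, pc.1 ≤ w₁ u1 + w₁ u2 ∧ w₁ u1 + w₁ u2 ≤ pc.2 := by
    intro u1 u2 hne hA
    obtain ⟨i, hi1, hi2⟩ := (W.adj_iff u1 u2 hne).mp hA
    have g1 := hw₁ge u1
    have g2 := hw₁ge u2
    apply hcov _ i (by linarith) (by linarith)
    rcases habs u1 u2 hne with h | h
    · left; linarith
    · right; linarith
  -- exclusion of non-edges inside V (allowing a small upward shift)
  have hnonedge : ∀ u1 u2 : V, u1 ≠ u2 → ¬ G.Adj u1 u2 → ∀ t : ℝ,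
      W.w u1 + W.w u2 ≤ t → t ≤ W.w u1 + W.w u2 + m/2 →
      ∀ pc ∈ PS, ¬(pc.1 ≤ t ∧ t ≤ pc.2) := by
    intro u1 u2 hne hnA t ht1 ht2 pc hpc ⟨hl, hr⟩
    obtain ⟨i, hsub1, hsub2⟩ := hsub pc hpc
    have hmm := hmmar u1 u2 hne hnA i
    rcases lt_max_iff.mp hmm with h | h
    · linarith
    · linarith
  -- the mixed-pairs characterisation
  have hmix : ∀ u : V,
      (G.Adj v u ↔ ∃ pc ∈ PS, pc.1 ≤ w₁ u + (w₁ v + ε) ∧ w₁ u + (w₁ v + ε) ≤ pc.2) := by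
    intro u
    by_cases hu : u = v
    · apply iff_of_false (by rw [hu]; exact G.irrefl)
      rintro ⟨pc, hpc, h1, h2⟩
      rw [hu] at h1 h2
      have heq : w₁ v + (w₁ v + ε) = P₁ + ε := by rw [hP₁def]; ring
      rw [heq] at h1 h2
      exact hN3 pc hpc ⟨h1, h2⟩
    · have hvu : v ≠ u := fun h => hu h.symm
      by_cases hA : G.Adj v u
      · apply iff_of_true hA
        obtain ⟨i, hi1, hi2⟩ := (W.adj_iff v u hvu).mp hA
        have g1 := hw₁ge v
        have g3 := hw₁u u hu
        apply hcov _ i (by rw [g3]; linarith) (by rw [g3]; linarith)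
        rcases habs v u hvu with h | h
        · left; linarith
        · right; linarith
      · apply iff_of_false hA
        rintro ⟨pc, hpc, h1, h2⟩
        have g1 := hw₁ge v
        have g3 := hw₁u u hu
        exact hnonedge v u hvu hA (w₁ u + (w₁ v + ε))
          (by rw [g3]; linarith) (by rw [g3]; linarith) pc hpc ⟨h1, h2⟩
  -- the full adjacency condition
  have hadjBIG : ∀ p q : V ⊕ X, p ≠ q →
      ((addFalseTwins X G v).Adj p q ↔
        ∃ pc ∈ PS, pc.1 ≤ w' p + w' q ∧ w' p + w' q ≤ pc.2) := by
    rintro (u1 | x1) (u2 | x2) hpq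
    · have hne : u1 ≠ u2 := fun h => hpq (by rw [h])
      show G.Adj u1 u2 ↔ _
      by_cases hA : G.Adj u1 u2
      · exact iff_of_true hA (hedge u1 u2 hne hA)
      · apply iff_of_false hA
        rintro ⟨pc, hpc, h1, h2⟩
        have g1 := hw₁ge u1
        have g2 := hw₁ge u2
        exact hnonedge u1 u2 hne hA (w₁ u1 + w₁ u2)
          (by linarith) (by linarith) pc hpc ⟨h1, h2⟩
    · show G.Adj v u1 ↔ _
      exact hmix u1
    · show G.Adj v u2 ↔ _
      have h := hmix u2
      have heq : w' (Sum.inr x1) + w' (Sum.inl u2) = w₁ u2 + (w₁ v + ε) := by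
        show (w₁ v + ε) + w₁ u2 = w₁ u2 + (w₁ v + ε)
        ring
      rw [heq]
      exact h
    · show False ↔ _
      apply iff_of_false (fun h => h)
      rintro ⟨pc, hpc, h1, h2⟩
      have heq : w' (Sum.inr x1) + w' (Sum.inr x2) = P₁ + 2*ε := by
        show (w₁ v + ε) + (w₁ v + ε) = P₁ + 2*ε
        rw [hP₁def]; ring
      rw [heq] at h1 h2
      exact hN4 pc hpc ⟨h1, h2⟩
  obtain ⟨Wnew⟩ := keyLemma (addFalseTwins X G v) w' hw'pos PS hpos' hab' hsep'
    hadjBIG (k+1) hcard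
  rw [starNumber]
  exact Nat.sInf_le ⟨Nat.succ_pos k, ⟨Wnew⟩⟩
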